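/- Write ρ(x) = Σ_{u∈U} ρ_u x^u with ρ_u ∈ F, and for every integer k ≥ 0 let b_k = Tr_{E/F}(β^k), where Tr_{E/F} is the field trace from E to F. Then for every orbit l ∈ L, every 0 ≤ i < t, and every integer j whose residue class modulo q^m−1 lies in l, one has h_{il} = (|l|·m^{−1})·Σ_{u∈U} ρ_u · b_{j(i+u)}, where |l|·m^{−1} denotes the element of F obtained as the image of the integer |l| times the inverse of the image of m (m is invertible in F since gcd(m,q)=1). -/

import Mathlib

open Polynomial

noncomputable section

/-- The orbit of `j : ZMod N` under multiplication by `q`. -/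
def qOrbit (N q : ℕ) (j : ZMod N) : Set (ZMod N) :=
  Set.range fun k : ℕ => (q : ZMod N) ^ k * j

/-- The set `L` of orbits of `ZMod N` under multiplication by `q`. -/
def orbitSet (N q : ℕ) : Set (Set (ZMod N)) :=
  {l | ∃ j : ZMod N, l = qOrbit N q j}

/-- `β ^ j` for a residue class `j`. -/
def bpow {E : Type*} [Monoid E] {N : ℕ} (β : E) (j : ZMod N) : E :=
  β ^ j.val

/-- The check-matrix entry `h_{i l} = ∑_{j ∈ l} ρ(β^j) β^{i j}`, as an element of `E`. -/
def hEntry {F E : Type*} [CommSemiring F] [CommSemiring E] [Algebra F E] {N : ℕ}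
    (β : E) (ρ : Polynomial F) (i : ℕ) (l : Set (ZMod N)) : E :=
  ∑ᶠ j ∈ l, Polynomial.aeval (bpow β j) ρ * bpow β j ^ i

/-- The code `C(ρ, t)` inside `F^L`. -/
def codeSet (F E : Type*) [Field F] [Field E] [Algebra F E] (N q : ℕ)
    (β : E) (ρ : Polynomial F) (t : ℕ) : Set (↥(orbitSet N q) → F) :=
  {c | ∀ i < t, ∑ᶠ l : orbitSet N q,
    algebraMap F E (c l) * hEntry β ρ i (l : Set (ZMod N)) = 0}

open scoped Classical in
/-- `deg c = ∑_{l : c_l ≠ 0} |l|`. -/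
def wdeg {F : Type*} [Zero F] {N q : ℕ} (c : ↥(orbitSet N q) → F) : ℕ :=
  ∑ᶠ l : orbitSet N q, if c l ≠ 0 then (l : Set (ZMod N)).ncard else 0

set_option maxHeartbeats 1000000 in
/-- With `b_k = Tr_{E/F}(β^k)`, for every orbit `l ∈ L`, every `0 ≤ i < t` and every
integer `j ≥ 0` whose residue class lies in `l`, one has
`h_{il} = (|l|·m⁻¹) ∑_{u ∈ U} ρ_u b_{j(i+u)}` (an identity in `E` via the inclusion
`F ⊆ E`). -/
theorem hEntry_eq_trace_formula (q m : ℕ) (hm : 0 < m) (hqm : Nat.Coprime q m)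
    (F E : Type*) [Field F] [Field E] [Fintype F] [Fintype E] [Algebra F E]
    (hF : Fintype.card F = q) (hE : Fintype.card E = q ^ m)
    (β : E) (hβ : orderOf β = q ^ m - 1) (ρ : Polynomial F) (t : ℕ) (ht : 0 < t) :
    ∀ l ∈ orbitSet (q ^ m - 1) q, ∀ i < t, ∀ j : ℕ, (j : ZMod (q ^ m - 1)) ∈ l →
      hEntry β ρ i l =
        algebraMap F E ((l.ncard : F) * (m : F)⁻¹ *
          ∑ u ∈ ρ.support, ρ.coeff u * Algebra.trace F E (β ^ (j * (i + u)))) := by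
  classical
  have hq2 : 1 < q := hF ▸ Fintype.one_lt_card
  have hqm2 : 1 < q ^ m := Nat.one_lt_pow hm.ne' hq2
  set N := q ^ m - 1 with hNdef
  haveI : NeZero N := ⟨by omega⟩
  have hNsucc : N + 1 = q ^ m := by omega
  intro l hl i hi j hj
  -- characteristic
  obtain ⟨p, hp⟩ := CharP.exists F
  haveI : CharP F p := hp
  obtain ⟨nn, hp_prime, hcard⟩ := FiniteField.card F p
  haveI : Fact p.Prime := ⟨hp_prime⟩
  haveI : CharP E p := charP_of_injective_algebraMap' F (A := E) p
  have hq : q = p ^ (nn : ℕ) := by rw [← hF, hcard]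
  -- the relative Frobenius, as an `F`-algebra endomorphism of `E`
  let ψ : E →ₐ[F] E :=
    { toRingHom := iterateFrobenius E p nn
      commutes' := fun a => by
        show algebraMap F E a ^ p ^ (nn : ℕ) = algebraMap F E a
        rw [← hq, ← map_pow, ← hF, FiniteField.pow_card] }
  have hψ1 : ∀ x : E, ψ x = x ^ q := fun x => by
    show iterateFrobenius E p nn x = x ^ q
    rw [iterateFrobenius_def, hq]
  have hψ : ∀ (k : ℕ) (x : E), (ψ ^ k) x = x ^ q ^ k := by
    intro k
    induction k with
    | zero => intro x; simp
    | succ k ih =>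
      intro x
      rw [pow_succ, AlgHom.mul_apply, hψ1, ih, ← pow_mul, ← pow_succ']
  have hψbij : Function.Bijective ψ :=
    Finite.injective_iff_bijective.mp ψ.toRingHom.injective
  let φ : E ≃ₐ[F] E := AlgEquiv.ofBijective ψ hψbij
  have hφ1 : ∀ x : E, φ x = x ^ q := hψ1
  have hφ : ∀ (k : ℕ) (x : E), (φ ^ k) x = x ^ q ^ k := by
    intro k
    induction k with
    | zero => intro x; simp
    | succ k ih =>
      intro x
      rw [pow_succ, AlgEquiv.mul_apply, hφ1, ih, ← pow_mul, ← pow_succ']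
  have hfinrank : Module.finrank F E = m := by
    have h1 : Fintype.card E = Fintype.card F ^ Module.finrank F E := Module.card_eq_pow_finrank
    rw [hF, hE] at h1
    exact Nat.pow_right_injective (by omega : 2 ≤ q) h1.symm
  have hcardGal : Fintype.card (E ≃ₐ[F] E) = m := by
    rw [← Nat.card_eq_fintype_card, IsGalois.card_aut_eq_finrank F E]; exact hfinrank
  have hcopqN : Nat.Coprime q N := by
    have h1 : Nat.Coprime (q ^ m) N := by
      have h2 := (Nat.coprime_self_sub_right (n := q ^ m) (m := 1) (by omega)).mpr
        (Nat.coprime_one_right _)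
      simpa using h2
    exact Nat.Coprime.coprime_dvd_left (dvd_pow_self q (by omega)) h1
  have hβ0 : β ≠ 0 := by
    intro h
    have h1 : β ^ N = 1 := by rw [← hβ]; exact pow_orderOf_eq_one β
    rw [h, zero_pow (by omega : N ≠ 0)] at h1
    exact zero_ne_one h1
  have hkey : ∀ a b : ℕ, a ≤ b → b < m → φ ^ a = φ ^ b → a = b := by
    intro a b hab hbm hfeq
    have h1 : β ^ q ^ a = β ^ q ^ b := by
      have h0 := congrArg (fun σ : E ≃ₐ[F] E => σ β) hfeq
      simpa [hφ] using h0
    have h1u : Units.mk0 β hβ0 ^ q ^ a = Units.mk0 β hβ0 ^ q ^ b := by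
      ext
      simpa using h1
    have h2 : q ^ a ≡ q ^ b [MOD N] := by
      have horder : orderOf (Units.mk0 β hβ0) = N := by
        rw [← hβ]
        exact orderOf_units.symm
      rw [← horder]; exact pow_eq_pow_iff_modEq.mp h1u
    have h3 : N ∣ q ^ b - q ^ a :=
      (Nat.modEq_iff_dvd' (Nat.pow_le_pow_right (by omega) hab)).mp h2
    have h4 : q ^ b - q ^ a = q ^ a * (q ^ (b - a) - 1) := by
      rw [Nat.mul_sub, mul_one, ← pow_add]
      congr 2
      omega
    rw [h4, mul_comm] at h3
    have h5 : N ∣ q ^ (b - a) - 1 :=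
      Nat.Coprime.dvd_of_dvd_mul_right ((hcopqN.pow_left a).symm) h3
    have h6 : q ^ (b - a) < q ^ m := Nat.pow_lt_pow_right hq2 (by omega)
    have h7 : q ^ (b - a) - 1 = 0 := Nat.eq_zero_of_dvd_of_lt h5 (by omega) |>.symm ▸ rfl
    have h8 : 1 ≤ q ^ (b - a) := Nat.one_le_pow _ _ (by omega)
    have h9 : q ^ (b - a) = 1 := by
      have := Nat.eq_zero_of_dvd_of_lt h5 (by omega)
      omega
    have h10 : b - a = 0 := by
      by_contra hc
      have := Nat.one_lt_pow hc hq2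
      omega
    omega
  have gbij : Function.Bijective (fun k : Fin m => φ ^ (k : ℕ)) := by
    rw [Fintype.bijective_iff_injective_and_card]
    constructor
    · intro a b hab
      rcases le_total (a : ℕ) (b : ℕ) with h | h
      · exact Fin.ext (hkey a b h b.isLt hab)
      · exact (Fin.ext (hkey b a h a.isLt hab.symm)).symm
    · rw [Fintype.card_fin, hcardGal]
  have htr : ∀ x : E, algebraMap F E (Algebra.trace F E x)
      = ∑ k ∈ Finset.range m, x ^ q ^ k := by
    intro x
    rw [trace_eq_sum_automorphisms]
    rw [← Fintype.sum_bijective _ gbij (fun k : Fin m => (φ ^ (k : ℕ)) x)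
      (fun σ => σ x) (fun k => rfl)]
    simp_rw [hφ]
    exact Fin.sum_univ_eq_sum_range (fun k => x ^ q ^ k) m
  -- orbit structure
  set jb : ZMod N := (j : ZMod N) with hjb
  have hq1 : (q : ZMod N) ^ m = 1 := by
    have h0 : ((q ^ m : ℕ) : ZMod N) = ((N + 1 : ℕ) : ZMod N) := by rw [hNsucc]
    push_cast at h0
    simpa [ZMod.natCast_self] using h0
  have horb_sub : ∀ y x : ZMod N, x ∈ qOrbit N q y → qOrbit N q x ⊆ qOrbit N q y := by
    rintro y x ⟨a, rfl⟩ z ⟨k, rfl⟩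
    refine ⟨k + a, ?_⟩
    show (q : ZMod N) ^ (k + a) * y = (q : ZMod N) ^ k * ((q : ZMod N) ^ a * y)
    rw [pow_add, mul_assoc]
  have horb_mem : ∀ y x : ZMod N, x ∈ qOrbit N q y → y ∈ qOrbit N q x := by
    rintro y x ⟨a, rfl⟩
    refine ⟨a * (m - 1), ?_⟩
    show (q : ZMod N) ^ (a * (m - 1)) * ((q : ZMod N) ^ a * y) = y
    rw [← mul_assoc, ← pow_add]
    have he : a * (m - 1) + a = m * a := by
      have hm1 : m - 1 + 1 = m := Nat.succ_pred_eq_of_pos hm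
      calc a * (m - 1) + a = (m - 1 + 1) * a := by ring
        _ = m * a := by rw [hm1]
    rw [he, pow_mul, hq1, one_pow, one_mul]
  have horb_eq : l = qOrbit N q jb := by
    obtain ⟨j₀, hl0⟩ := hl
    rw [hl0] at hj ⊢
    exact Set.Subset.antisymm (horb_sub jb j₀ (horb_mem j₀ jb hj)) (horb_sub j₀ jb hj)
  set f : ZMod N → ZMod N := fun x => (q : ZMod N) * x with hf
  have hiter : ∀ (k : ℕ) (x : ZMod N), f^[k] x = (q : ZMod N) ^ k * x := by
    intro k
    induction k with
    | zero => intro x; simp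
    | succ k ih =>
      intro x
      rw [Function.iterate_succ_apply', ih]
      show (q : ZMod N) * ((q : ZMod N) ^ k * x) = (q : ZMod N) ^ (k + 1) * x
      rw [← mul_assoc, ← pow_succ']
  have hper : Function.IsPeriodicPt f m jb := by
    show f^[m] jb = jb
    rw [hiter, hq1, one_mul]
  set d := Function.minimalPeriod f jb with hd
  have hd_pos : 0 < d := hper.minimalPeriod_pos hm
  obtain ⟨e, hde⟩ : d ∣ m := hper.minimalPeriod_dvd
  have hfix : (q : ZMod N) ^ d * jb = jb := by
    have h0 := Function.iterate_minimalPeriod (f := f) (x := jb)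
    rwa [hiter] at h0
  have hbp : ∀ a : ℕ, bpow β ((a : ZMod N)) = β ^ a := by
    intro a
    show β ^ (((a : ℕ) : ZMod N)).val = β ^ a
    rw [ZMod.val_natCast, ← hβ]
    exact pow_mod_orderOf β a
  set s : Finset (ZMod N) := (Finset.range d).image (fun k => (q : ZMod N) ^ k * jb) with hs
  have hinjOn : ∀ a ∈ Finset.range d, ∀ b ∈ Finset.range d,
      (q : ZMod N) ^ a * jb = (q : ZMod N) ^ b * jb → a = b := by
    intro a ha b hb hab
    refine Function.iterate_injOn_Iio_minimalPeriod (f := f) (x := jb)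
      (Set.mem_Iio.mpr (Finset.mem_range.mp ha)) (Set.mem_Iio.mpr (Finset.mem_range.mp hb)) ?_
    show f^[a] jb = f^[b] jb
    rw [hiter, hiter]; exact hab
  have hset : qOrbit N q jb = ↑s := by
    ext x
    constructor
    · rintro ⟨k, rfl⟩
      have h0 : (q : ZMod N) ^ k * jb = (q : ZMod N) ^ (k % d) * jb := by
        rw [← hiter, ← hiter]
        exact (Function.iterate_mod_minimalPeriod_eq (f := f) (x := jb) (n := k)).symm
      show (q : ZMod N) ^ k * jb ∈ ↑s
      rw [h0]
      exact Finset.mem_coe.mpr (Finset.mem_image.mpr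
        ⟨k % d, Finset.mem_range.mpr (Nat.mod_lt _ hd_pos), rfl⟩)
    · intro hx
      obtain ⟨k, _, rfl⟩ := Finset.mem_image.mp (Finset.mem_coe.mp hx)
      exact ⟨k, rfl⟩
  have hncard : l.ncard = d := by
    rw [horb_eq, hset, Set.ncard_coe_finset, hs,
      Finset.card_image_of_injOn (fun a ha b hb hab => hinjOn a ha b hb hab),
      Finset.card_range]
  -- the basic summand
  set S : E := Polynomial.aeval (β ^ j) ρ * (β ^ j) ^ i with hS
  have hcast : ∀ k : ℕ, (q : ZMod N) ^ k * jb = ((q ^ k * j : ℕ) : ZMod N) := by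
    intro k
    rw [hjb]; push_cast; ring
  have hterm : ∀ k : ℕ,
      Polynomial.aeval (bpow β ((q : ZMod N) ^ k * jb)) ρ
        * bpow β ((q : ZMod N) ^ k * jb) ^ i = (ψ ^ k) S := by
    intro k
    have hb1 : bpow β ((q : ZMod N) ^ k * jb) = β ^ (q ^ k * j) := by rw [hcast k, hbp]
    have hb2 : (ψ ^ k) (β ^ j) = β ^ (q ^ k * j) := by
      rw [hψ, ← pow_mul, mul_comm j (q ^ k)]
    rw [hb1, hS, map_mul, map_pow, hb2, ← Polynomial.aeval_algHom_apply, hb2]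
  have hsum1 : hEntry β ρ i l = ∑ k ∈ Finset.range d, (ψ ^ k) S := by
    rw [horb_eq, hset]
    show (∑ᶠ x ∈ (↑s : Set (ZMod N)),
        Polynomial.aeval (bpow β x) ρ * bpow β x ^ i) = _
    rw [finsum_mem_coe_finset, hs,
      Finset.sum_image (fun a ha b hb hab => hinjOn a ha b hb hab)]
    exact Finset.sum_congr rfl (fun k _ => hterm k)
  have hψd : (ψ ^ d) S = S := by
    have h1 := hterm d
    rw [hfix] at h1
    rw [← h1, hjb, hbp, hS]
  have hψmul : ∀ a : ℕ, (ψ ^ (d * a)) S = S := by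
    intro a
    induction a with
    | zero => simp
    | succ a ih => rw [Nat.mul_succ, pow_add, AlgHom.mul_apply, hψd, ih]
  set T : E := ∑ k ∈ Finset.range d, (ψ ^ k) S with hT
  have haux : ∀ e' : ℕ, ∑ k ∈ Finset.range (d * e'), (ψ ^ k) S = e' • T := by
    intro e'
    induction e' with
    | zero => simp
    | succ e' ih =>
      rw [Nat.mul_succ]
      calc ∑ k ∈ Finset.range (d * e' + d), (ψ ^ k) S
          = ∑ k ∈ Finset.Ico 0 (d * e'), (ψ ^ k) S
            + ∑ k ∈ Finset.Ico (d * e') (d * e' + d), (ψ ^ k) S := by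
            rw [Finset.sum_Ico_consecutive _ (Nat.zero_le _) (Nat.le_add_right _ _),
              Finset.range_eq_Ico]
        _ = e' • T + ∑ k ∈ Finset.Ico (d * e') (d * e' + d), (ψ ^ k) S := by
            rw [Nat.Ico_zero_eq_range, ih]
        _ = e' • T + T := by
            congr 1
            rw [Finset.sum_Ico_eq_sum_range]
            simp only [Nat.add_sub_cancel_left]
            refine Finset.sum_congr rfl (fun k _ => ?_)
            rw [add_comm (d * e') k, pow_add, AlgHom.mul_apply, hψmul]
        _ = (e' + 1) • T := (succ_nsmul T e').symm
  have hsum2 : ∑ k ∈ Finset.range m, (ψ ^ k) S = e • T := by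
    rw [hde]; exact haux e
  have hSsum : S = ∑ u ∈ ρ.support, algebraMap F E (ρ.coeff u) * β ^ (j * (i + u)) := by
    rw [hS, Polynomial.aeval_def, Polynomial.eval₂_eq_sum, Polynomial.sum_def,
      Finset.sum_mul]
    refine Finset.sum_congr rfl (fun u _ => ?_)
    rw [mul_assoc, ← pow_mul, ← pow_mul, ← pow_add,
      show j * u + j * i = j * (i + u) by ring]
  have hRHS : algebraMap F E
      (∑ u ∈ ρ.support, ρ.coeff u * Algebra.trace F E (β ^ (j * (i + u)))) = e • T := by
    rw [map_sum, ← hsum2]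
    simp_rw [map_mul, htr, Finset.mul_sum]
    rw [Finset.sum_comm]
    refine Finset.sum_congr rfl (fun k _ => ?_)
    rw [hSsum, map_sum]
    refine Finset.sum_congr rfl (fun u _ => ?_)
    rw [map_mul, AlgHom.commutes, hψ]
  have hm0 : (m : F) ≠ 0 := by
    rw [Ne, CharP.cast_eq_zero_iff F p]
    intro hdvd
    have hpq : p ∣ q := hq ▸ dvd_pow_self p nn.pos.ne'
    have hcop : Nat.Coprime p m := Nat.Coprime.coprime_dvd_left hpq hqm
    exact (Nat.Prime.coprime_iff_not_dvd hp_prime).mp hcop hdvd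
  have hde' : (d : F) * (m : F)⁻¹ * (e : F) = 1 := by
    have h1 : (d : F) * (e : F) = (m : F) := by
      rw [← Nat.cast_mul, ← hde]
    field_simp
    linear_combination h1
  have hfinal : algebraMap F E ((d : F) * (m : F)⁻¹ *
      ∑ u ∈ ρ.support, ρ.coeff u * Algebra.trace F E (β ^ (j * (i + u)))) = T := by
    rw [map_mul, hRHS, nsmul_eq_mul, ← map_natCast (algebraMap F E) e,
      ← mul_assoc, ← map_mul, hde', map_one, one_mul]
  rw [hncard]
  exact hsum1.trans (hT.symm.trans hfinal.symm)
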